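/- Let m ≥ 0 be a real number. The function F₁(x) = (x+m)^x / (x−1+m)^{x−1} is strictly increasing where defined; that is, for all real numbers x, y with 1 ≤ x < y and x − 1 + m > 0, one has (x+m)^x / (x−1+m)^{x−1} < (y+m)^y / (y−1+m)^{y−1}. -/

import Mathlib

/-- **Proposition 1 (Wang).** For a real number `m ≥ 0`, the function
`F₁(x) = (x+m)^x / (x-1+m)^(x-1)` (real powers) is strictly increasing where it
is defined, i.e. for `1 ≤ x < y` with `x - 1 + m > 0`. -/
theorem prop_F1_strictMono (m : ℝ) (hm : 0 ≤ m) (x y : ℝ)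
    (hx : 1 ≤ x) (hxy : x < y) (hpos : 0 < x - 1 + m) :
    (x + m) ^ x / (x - 1 + m) ^ (x - 1) < (y + m) ^ y / (y - 1 + m) ^ (y - 1) := by
  set f : ℝ → ℝ := fun t => t * Real.log (t + m) - (t - 1) * Real.log (t - 1 + m) with hf
  have hbound : ∀ t : ℝ, x ≤ t → 0 < t - 1 + m ∧ 0 < t + m := by
    intro t ht
    constructor <;> nlinarith
  have hderiv : ∀ t : ℝ, x ≤ t → HasDerivAt f
      (Real.log (t + m) + t / (t + m)
        - (Real.log (t - 1 + m) + (t - 1) / (t - 1 + m))) t := by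
    intro t ht
    obtain ⟨h1, h2⟩ := hbound t ht
    have d1 : HasDerivAt (fun s : ℝ => s + m) 1 t := (hasDerivAt_id t).add_const m
    have d2 : HasDerivAt (fun s : ℝ => s - 1 + m) 1 t :=
      ((hasDerivAt_id t).sub_const 1).add_const m
    have l1 : HasDerivAt (fun s : ℝ => Real.log (s + m)) (1 / (t + m)) t := d1.log h2.ne'
    have l2 : HasDerivAt (fun s : ℝ => Real.log (s - 1 + m)) (1 / (t - 1 + m)) t :=
      d2.log h1.ne'
    have := ((hasDerivAt_id t).mul l1).sub (((hasDerivAt_id t).sub_const 1).mul l2)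
    convert this using 1
    · rfl
    · rfl
    · rfl
    simp [id]
    ring
  have hmono : StrictMonoOn f (Set.Ici x) := by
    apply strictMonoOn_of_deriv_pos (convex_Ici x)
    · intro t ht
      exact ((hderiv t ht).differentiableAt.continuousAt).continuousWithinAt
    · intro t ht
      rw [interior_Ici] at ht
      have ht' : x ≤ t := le_of_lt ht
      obtain ⟨h1, h2⟩ := hbound t ht'
      rw [(hderiv t ht').deriv]
      have hlog : Real.log (t - 1 + m) < Real.log (t + m) :=
        Real.log_lt_log h1 (by linarith)
      have hfrac : (t - 1) / (t - 1 + m) ≤ t / (t + m) := by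
        rw [div_le_div_iff₀ h1 h2]
        nlinarith
      linarith
  have hfx : f x < f y := hmono (Set.self_mem_Ici) (le_of_lt hxy) hxy
  obtain ⟨h1x, h2x⟩ := hbound x le_rfl
  obtain ⟨h1y, h2y⟩ := hbound y (le_of_lt hxy)
  have ex : (x + m) ^ x / (x - 1 + m) ^ (x - 1) = Real.exp (f x) := by
    rw [Real.rpow_def_of_pos h2x, Real.rpow_def_of_pos h1x, ← Real.exp_sub]
    ring_nf
    simp only [hf]
    ring_nf
  have ey : (y + m) ^ y / (y - 1 + m) ^ (y - 1) = Real.exp (f y) := by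
    rw [Real.rpow_def_of_pos h2y, Real.rpow_def_of_pos h1y, ← Real.exp_sub]
    ring_nf
    simp only [hf]
    ring_nf
  rw [ex, ey]
  exact Real.exp_lt_exp.mpr hfx
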